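/- arXiv:1801.00420 — 3 statements merged into one kernel-verified Lean document; each statement's English description precedes it below -/
import Mathlib

section
/- The compacton profile Φ_{B,c}(x) = sqrt(c + sqrt(4B + c²) cos(√2 x)), defined for x in (-x_{B,c}, x_{B,c}) where x_{B,c} is the smallest positive solution of cos(√2 x) = -c/sqrt(4B+c²), satisfies the traveling wave ODE -c Φ' + (Φ(ΦΦ')' + Φ³)' = 0 on its interval of definition. -/
open Real Set

/-- The compacton profile `Φ_{B,c}` satisfies the traveling wave ODE
`-c Φ' + (Φ(ΦΦ')' + Φ³)' = 0` on its interval of definition `(-x_{B,c}, x_{B,c})`. -/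
theorem compacton_satisfies_traveling_wave_ODE
    (B c : ℝ) (hBc : (0 < B) ∨ (B = 0 ∧ 0 < c))
    (Φ : ℝ → ℝ)
    (hΦ : ∀ x, Φ x = Real.sqrt (c + Real.sqrt (4 * B + c ^ 2) * Real.cos (Real.sqrt 2 * x)))
    (xBc : ℝ) (hxBc_pos : 0 < xBc)
    (hxBc_root : Real.cos (Real.sqrt 2 * xBc) = -c / Real.sqrt (4 * B + c ^ 2))
    (hxBc_min : ∀ x, 0 < x → x < xBc →
      Real.cos (Real.sqrt 2 * x) ≠ -c / Real.sqrt (4 * B + c ^ 2)) :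
    ∀ x ∈ Ioo (-xBc) xBc,
      -c * deriv Φ x +
        deriv (fun z => Φ z * deriv (fun y => Φ y * deriv Φ y) z + (Φ z) ^ 3) x = 0 := by
  intro x hx
  set A := Real.sqrt (4 * B + c ^ 2) with hA_def
  have h4Bc : 0 < 4 * B + c ^ 2 := by
    rcases hBc with hB | ⟨hB, hc⟩
    · positivity
    · rw [hB]; positivity
  have hA : 0 < A := Real.sqrt_pos.mpr h4Bc
  have hcA : 0 < c + A := by
    rcases hBc with hB | ⟨hB, hc⟩
    · have habs : |c| < A := by
        rw [hA_def, show |c| = Real.sqrt (c ^ 2) from (Real.sqrt_sq_eq_abs c).symm]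
        exact Real.sqrt_lt_sqrt (sq_nonneg c) (by linarith)
      linarith [neg_abs_le c]
    · have hAc : A = c := by
        rw [hA_def, hB]
        rw [show 4 * (0:ℝ) + c ^ 2 = c ^ 2 by ring]
        rw [Real.sqrt_sq hc.le]
      linarith
  -- positivity of the radicand on the interval of definition
  have hg : ∀ y ∈ Ioo (-xBc) xBc, 0 < c + A * Real.cos (Real.sqrt 2 * y) := by
    intro y hy
    have habs : |y| < xBc := abs_lt.mpr ⟨hy.1, hy.2⟩
    have hcos_eq : Real.cos (Real.sqrt 2 * y) = Real.cos (Real.sqrt 2 * |y|) := by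
      rcases abs_choice y with h | h
      · rw [h]
      · rw [h, mul_neg, Real.cos_neg]
    have h0 : -c / A < 1 := by
      rw [div_lt_one hA]; linarith
    have hkey : -c / A < Real.cos (Real.sqrt 2 * |y|) := by
      by_contra hcon
      push_neg at hcon
      have hy0 : |y| ≠ 0 := by
        intro h0'
        rw [h0', mul_zero, Real.cos_zero] at hcon
        linarith
      have hypos : 0 < |y| := (abs_nonneg y).lt_of_ne (Ne.symm hy0)
      have hcont : ContinuousOn (fun s => Real.cos (Real.sqrt 2 * s)) (Icc 0 |y|) :=
        (Real.continuous_cos.comp (continuous_const.mul continuous_id)).continuousOn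
      have hmem : -c / A ∈
          Icc (Real.cos (Real.sqrt 2 * |y|)) ((fun s => Real.cos (Real.sqrt 2 * s)) 0) := by
        constructor
        · exact hcon
        · simp only [mul_zero, Real.cos_zero]; linarith
      obtain ⟨s, hs, hseq⟩ := intermediate_value_Icc' hypos.le hcont hmem
      simp only at hseq
      have hs0 : s ≠ 0 := by
        intro h'
        rw [h', mul_zero, Real.cos_zero] at hseq
        linarith
      exact hxBc_min s (hs.1.lt_of_ne (Ne.symm hs0)) (lt_of_le_of_lt hs.2 habs) hseq
    rw [hcos_eq]
    have hmul : -c < Real.cos (Real.sqrt 2 * |y|) * A := (div_lt_iff₀ hA).mp hkey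
    nlinarith
  have hΦeq : Φ = fun y => Real.sqrt (c + A * Real.cos (Real.sqrt 2 * y)) := by
    funext y; rw [hΦ y]
  have hgderiv : ∀ y : ℝ, HasDerivAt (fun z => c + A * Real.cos (Real.sqrt 2 * z))
      (A * (-Real.sin (Real.sqrt 2 * y) * Real.sqrt 2)) y := by
    intro y
    have h1 : HasDerivAt (fun z : ℝ => Real.sqrt 2 * z) (Real.sqrt 2) y := by
      simpa using (hasDerivAt_id y).const_mul (Real.sqrt 2)
    exact (h1.cos.const_mul A).const_add c
  have hΦder : ∀ y ∈ Ioo (-xBc) xBc,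
      HasDerivAt Φ (A * (-Real.sin (Real.sqrt 2 * y) * Real.sqrt 2) /
        (2 * Real.sqrt (c + A * Real.cos (Real.sqrt 2 * y)))) y := by
    intro y hy
    rw [hΦeq]
    exact (hgderiv y).sqrt (ne_of_gt (hg y hy))
  have hIoo_open : IsOpen (Ioo (-xBc) xBc) := isOpen_Ioo
  have hprod : ∀ y ∈ Ioo (-xBc) xBc,
      Φ y * deriv Φ y = A * (-Real.sin (Real.sqrt 2 * y) * Real.sqrt 2) / 2 := by
    intro y hy
    rw [(hΦder y hy).deriv, hΦ y]
    have hpos := hg y hy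
    have hs : Real.sqrt (c + A * Real.cos (Real.sqrt 2 * y)) ≠ 0 :=
      ne_of_gt (Real.sqrt_pos.mpr hpos)
    field_simp
  have hFder : ∀ y : ℝ,
      HasDerivAt (fun z => A * (-Real.sin (Real.sqrt 2 * z) * Real.sqrt 2) / 2)
        (-(A * Real.cos (Real.sqrt 2 * y))) y := by
    intro y
    have h1 : HasDerivAt (fun z : ℝ => Real.sqrt 2 * z) (Real.sqrt 2) y := by
      simpa using (hasDerivAt_id y).const_mul (Real.sqrt 2)
    have h2 := h1.sin.const_mul (-(A * Real.sqrt 2 / 2))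
    have heq : (fun z => A * (-Real.sin (Real.sqrt 2 * z) * Real.sqrt 2) / 2)
        = fun z => -(A * Real.sqrt 2 / 2) * Real.sin (Real.sqrt 2 * z) := by
      funext z; ring
    rw [heq]
    refine h2.congr_deriv ?_
    have h22 : Real.sqrt 2 * Real.sqrt 2 = 2 := Real.mul_self_sqrt (by norm_num)
    linear_combination (-(A * Real.cos (Real.sqrt 2 * y) / 2)) * h22
  have hhder : ∀ y ∈ Ioo (-xBc) xBc,
      HasDerivAt (fun z => Φ z * deriv Φ z) (-(A * Real.cos (Real.sqrt 2 * y))) y := by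
    intro y hy
    apply (hFder y).congr_of_eventuallyEq
    filter_upwards [hIoo_open.mem_nhds hy] with z hz
    exact hprod z hz
  have hsq : ∀ y ∈ Ioo (-xBc) xBc, Φ y ^ 2 = c + A * Real.cos (Real.sqrt 2 * y) := by
    intro y hy
    rw [hΦ y]
    exact Real.sq_sqrt (hg y hy).le
  have hinner : ∀ y ∈ Ioo (-xBc) xBc,
      Φ y * deriv (fun z => Φ z * deriv Φ z) y + Φ y ^ 3 = c * Φ y := by
    intro y hy
    rw [(hhder y hy).deriv]
    have h3 : Φ y ^ 3 = Φ y * (c + A * Real.cos (Real.sqrt 2 * y)) := by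
      rw [← hsq y hy]; ring
    rw [h3]; ring
  have hgoal_inner : HasDerivAt
      (fun z => Φ z * deriv (fun y => Φ y * deriv Φ y) z + (Φ z) ^ 3)
      (c * (A * (-Real.sin (Real.sqrt 2 * x) * Real.sqrt 2) /
        (2 * Real.sqrt (c + A * Real.cos (Real.sqrt 2 * x))))) x := by
    apply ((hΦder x hx).const_mul c).congr_of_eventuallyEq
    filter_upwards [hIoo_open.mem_nhds hx] with z hz
    exact hinner z hz
  rw [hgoal_inner.deriv, (hΦder x hx).deriv]
  ring
end

section
/- Focusing non-existence of confined global solutions: if u_0 ≠ 0 and H(u_0) ≥ 0, there is no globally defined solution u of u_t + (u(u u_x)_x + u³)_x = 0 (with u ∈ C¹([0,∞)×ℝ), u² ∈ C([0,∞); C³(ℝ))) whose support remains contained in a fixed bounded interval [−M, M] for all times. -/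
open Real Set MeasureTheory Filter

/-- The drift `b = (1/2)(u²)_{xx} + μ u²` of the hydrodynamic formulation. -/
noncomputable def hydroDrift (μ : ℝ) (u : ℝ → ℝ → ℝ) (t x : ℝ) : ℝ :=
  (1 / 2) * iteratedDeriv 2 (fun z => (u t z) ^ 2) x + μ * (u t x) ^ 2

/-- `u` is a hydrodynamic solution on `[0,∞)`: `u ∈ C¹`, `u² ∈ C⁰_t C³_x`, and
`u_t + (b u)_x = 0` with `b = (1/2)(u²)_{xx} + μ u²`. -/
structure IsHydroSolution (μ : ℝ) (u : ℝ → ℝ → ℝ) : Prop where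
  reg_C1 : ContDiffOn ℝ 1 (Function.uncurry u) (Ici (0:ℝ) ×ˢ univ)
  reg_sq_C3 : ∀ t, 0 ≤ t → ContDiff ℝ 3 (fun x => (u t x) ^ 2)
  reg_sq_cont : ∀ n ≤ 3, ContinuousOn
      (fun p : ℝ × ℝ => iteratedDeriv n (fun z => (u p.1 z) ^ 2) p.2) (Ici (0:ℝ) ×ˢ univ)
  eq : ∀ t, 0 ≤ t → ∀ x : ℝ,
      deriv (fun s => u s x) t + deriv (fun z => hydroDrift μ u t z * u t z) x = 0


lemma hydro_aux_bound {f : ℝ × ℝ → ℝ} {S : Set (ℝ × ℝ)} (hf : ContinuousOn f S)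
    {a b c d : ℝ} (hsub : Icc a b ×ˢ Icc c d ⊆ S) :
    ∃ C : ℝ, ∀ s ∈ Icc a b, ∀ x ∈ Icc c d, |f (s, x)| ≤ C := by
  obtain ⟨C, hC⟩ := (IsCompact.prod isCompact_Icc isCompact_Icc).exists_bound_of_continuousOn
    (hf.mono hsub)
  exact ⟨C, fun s hs x hx => hC (s, x) ⟨hs, hx⟩⟩

lemma hydro_aux_slope (v Vt A : ℝ → ℝ → ℝ) (R : ℝ) (hR : 0 ≤ R) (Φ : ℝ → ℝ)
    (t₀ : ℝ) (ht₀ : 0 < t₀)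
    (hVt : ContinuousOn (Function.uncurry Vt) (Ici (0:ℝ) ×ˢ univ))
    (hA : ContinuousOn (Function.uncurry A) (Ici (0:ℝ) ×ˢ univ))
    (hvc : ∀ s, 0 < s → Continuous (v s))
    (hd : ∀ x : ℝ, ∀ s, 0 < s → HasDerivAt (fun τ => v τ x) (Vt s x) s)
    (hiden : ∀ s, 0 < s → Φ s - Φ t₀ = ∫ x in (-R)..R, (v s x - v t₀ x) * A s x) :
    HasDerivAt Φ (∫ x in (-R)..R, Vt t₀ x * A t₀ x) t₀ := by
  have hIci : ∀ p : ℝ × ℝ, p.1 ∈ Ici (0:ℝ) → p ∈ Ici (0:ℝ) ×ˢ (univ : Set ℝ) :=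
    fun p hp => ⟨hp, mem_univ _⟩
  set δ := t₀ / 2 with hδ
  have hδpos : 0 < δ := by positivity
  have hsub : Icc (t₀ - δ) (t₀ + δ) ×ˢ Icc (-R) R ⊆ Ici (0:ℝ) ×ˢ (univ : Set ℝ) := by
    rintro ⟨s, x⟩ ⟨hs, -⟩
    refine ⟨le_trans (by simp only [hδ]; linarith) hs.1, mem_univ _⟩
  obtain ⟨CV, hCV⟩ := hydro_aux_bound hVt hsub
  obtain ⟨CA, hCA⟩ := hydro_aux_bound hA hsub
  have hRIcc : (0:ℝ) ∈ Icc (-R) R := ⟨by linarith, hR⟩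
  have htIcc : t₀ ∈ Icc (t₀ - δ) (t₀ + δ) := ⟨by linarith, by linarith⟩
  have hCV0 : 0 ≤ CV := le_trans (abs_nonneg _) (hCV t₀ htIcc 0 hRIcc)
  have hIoc_Icc : Set.uIoc (-R) R ⊆ Icc (-R) R := by
    rw [Set.uIoc_of_le (by linarith : -R ≤ R)]
    exact Ioc_subset_Icc_self
  rw [hasDerivAt_iff_tendsto_slope]
  have hball : ∀ s ∈ Metric.ball t₀ δ, 0 < s ∧ s ∈ Icc (t₀ - δ) (t₀ + δ) := by
    intro s hs
    rw [Metric.mem_ball, Real.dist_eq, abs_lt] at hs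
    exact ⟨by linarith, ⟨by linarith, by linarith⟩⟩
  have hev : ∀ᶠ s in nhdsWithin t₀ {t₀}ᶜ, s ∈ Metric.ball t₀ δ \ {t₀} := by
    filter_upwards [self_mem_nhdsWithin,
      nhdsWithin_le_nhds (Metric.ball_mem_nhds t₀ hδpos)] with s h1 h2
    exact ⟨h2, h1⟩
  have hslA : ∀ s, 0 < s → Continuous (A s) := by
    intro s hs
    exact hA.comp_continuous (continuous_const.prodMk continuous_id)
      (fun x => hIci (s, x) hs.le)
  have hkey : Filter.Tendsto
      (fun s => ∫ x in (-R)..R, ((s - t₀)⁻¹ * (v s x - v t₀ x)) * A s x)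
      (nhdsWithin t₀ {t₀}ᶜ) (nhds (∫ x in (-R)..R, Vt t₀ x * A t₀ x)) := by
    apply intervalIntegral.tendsto_integral_filter_of_dominated_convergence
      (bound := fun _ => CV * (|CA| + 1))
    · filter_upwards [hev] with s hs
      have hs' : 0 < s := (hball s hs.1).1
      exact (Continuous.mul (by
        exact (continuous_const.mul ((hvc s hs').sub (hvc t₀ ht₀)))) (hslA s hs')).aestronglyMeasurable.restrict
    · filter_upwards [hev] with s hs
      refine ae_of_all _ (fun x hx => ?_)
      have hx' : x ∈ Icc (-R) R := hIoc_Icc hx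
      have hs' : 0 < s := (hball s hs.1).1
      have hsI : s ∈ Icc (t₀ - δ) (t₀ + δ) := (hball s hs.1).2
      have huIcc : uIcc t₀ s ⊆ Icc (t₀ - δ) (t₀ + δ) := uIcc_subset_Icc htIcc hsI
      have hcτ : ContinuousOn (fun τ => Vt τ x) (uIcc t₀ s) := by
        refine (hVt.comp (Continuous.continuousOn (continuous_id.prodMk continuous_const)) ?_).mono huIcc
        intro τ hτ
        exact hIci (τ, x) (le_trans (by linarith [htIcc.1]) hτ.1)
      have hftc : v s x - v t₀ x = ∫ τ in t₀..s, Vt τ x := by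
        rw [intervalIntegral.integral_eq_sub_of_hasDerivAt
          (fun τ hτ => hd x τ (by have := (huIcc hτ).1; linarith))
          (hcτ.intervalIntegrable)]
      have hbnd : |v s x - v t₀ x| ≤ CV * |s - t₀| := by
        rw [hftc]
        have := intervalIntegral.norm_integral_le_of_norm_le_const
          (C := CV) (f := fun τ => Vt τ x) (a := t₀) (b := s)
          (fun τ hτ => hCV τ (huIcc (uIoc_subset_uIcc hτ)) x hx')
        simpa using this
      have hAb : |A s x| ≤ |CA| + 1 :=
        le_trans (hCA s hsI x hx') (by cases abs_cases CA with
          | inl h => linarith [h.1] | inr h => linarith [h.1])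
      have hne : s - t₀ ≠ 0 := sub_ne_zero.mpr hs.2
      calc ‖(s - t₀)⁻¹ * (v s x - v t₀ x) * A s x‖
          = |s - t₀|⁻¹ * |v s x - v t₀ x| * |A s x| := by
            rw [Real.norm_eq_abs, abs_mul, abs_mul, abs_inv]
        _ ≤ |s - t₀|⁻¹ * (CV * |s - t₀|) * (|CA| + 1) := by
            apply mul_le_mul (mul_le_mul le_rfl hbnd (abs_nonneg _) (by positivity)) hAb
              (abs_nonneg _) (by positivity)
        _ = CV * (|CA| + 1) := by
            field_simp
    · exact intervalIntegrable_const
    · refine ae_of_all _ (fun x hx => ?_)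
      have h1 : Filter.Tendsto (fun s => (s - t₀)⁻¹ * (v s x - v t₀ x))
          (nhdsWithin t₀ {t₀}ᶜ) (nhds (Vt t₀ x)) := by
        have := hasDerivAt_iff_tendsto_slope.mp (hd x t₀ ht₀)
        refine this.congr (fun s => ?_)
        rw [slope_def_field]; ring
      have h2 : Filter.Tendsto (fun s => A s x) (nhdsWithin t₀ {t₀}ᶜ) (nhds (A t₀ x)) := by
        have hmem : Ici (0:ℝ) ×ˢ (univ : Set ℝ) ∈ nhds (t₀, x) := by
          have : Ioi (0:ℝ) ×ˢ (univ : Set ℝ) ∈ nhds (t₀, x) :=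
            (isOpen_Ioi.prod isOpen_univ).mem_nhds ⟨ht₀, mem_univ _⟩
          exact Filter.mem_of_superset this (prod_mono Ioi_subset_Ici_self le_rfl)
        have hc : ContinuousAt (Function.uncurry A) (t₀, x) := hA.continuousAt hmem
        have hmk : Filter.Tendsto (fun s : ℝ => (s, x)) (nhds t₀) (nhds (t₀, x)) :=
          (continuous_id.prodMk continuous_const).tendsto t₀
        exact (hc.tendsto.comp hmk).mono_left nhdsWithin_le_nhds
      exact h1.mul h2
  refine hkey.congr' ?_
  filter_upwards [hev] with s hs
  have hs' : 0 < s := (hball s hs.1).1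
  rw [slope_def_field, hiden s hs', div_eq_inv_mul, ← intervalIntegral.integral_const_mul]
  congr 1; funext x; ring

set_option maxHeartbeats 3000000 in
/-- Focusing non-existence of confined global solutions: if `u₀ ≠ 0` and `H(u₀) ≥ 0`,
there is no global hydrodynamic solution of the focusing equation with `u(0) = u₀`
whose support stays in a fixed interval `[-M, M]` for all times. -/
theorem focusing_no_confined_global_solution (u₀ : ℝ → ℝ) (hu₀ : u₀ ≠ 0)
    (hH : 0 ≤ (1 / 2) * (∫ x : ℝ, (u₀ x * deriv u₀ x) ^ 2)
            - (1 / 4) * (∫ x : ℝ, (u₀ x) ^ 4)) :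
    ¬ ∃ (u : ℝ → ℝ → ℝ) (M : ℝ), 0 < M ∧ u 0 = u₀ ∧ IsHydroSolution 1 u ∧
        ∀ t, 0 ≤ t → Function.support (u t) ⊆ Icc (-M) M := by
  rintro ⟨u, M, hM, hu0, hsol, hsupp⟩
  subst hu0
  set S : Set (ℝ × ℝ) := Ici (0:ℝ) ×ˢ univ with hS_def
  set R : ℝ := M + 1 with hR_def
  have hR0 : 0 < R := by linarith
  have hRM : M < R := by linarith
  set v : ℝ → ℝ → ℝ := fun t x => u t x ^ 2 with hv_def
  set vx : ℝ → ℝ → ℝ := fun t x => iteratedDeriv 1 (v t) x with hvx_def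
  set vxx : ℝ → ℝ → ℝ := fun t x => iteratedDeriv 2 (v t) x with hvxx_def
  set vxxx : ℝ → ℝ → ℝ := fun t x => iteratedDeriv 3 (v t) x with hvxxx_def
  set bb : ℝ → ℝ → ℝ := fun t x => (1/2) * vxx t x + v t x with hbb_def
  set bx : ℝ → ℝ → ℝ := fun t x => (1/2) * vxxx t x + vx t x with hbx_def
  set Vt : ℝ → ℝ → ℝ := fun t x => -(2 * bx t x * v t x + bb t x * vx t x) with hVt_def
  -- basic membership helper
  have hIci : ∀ p : ℝ × ℝ, (0:ℝ) ≤ p.1 → p ∈ S := fun p hp => ⟨hp, mem_univ _⟩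
  -- joint continuity of v and its spatial derivatives
  have hcv : ContinuousOn (Function.uncurry v) S := by
    have := hsol.reg_sq_cont 0 (by norm_num)
    simp only [iteratedDeriv_zero] at this; exact this
  have hcvx : ContinuousOn (Function.uncurry vx) S := hsol.reg_sq_cont 1 (by norm_num)
  have hcvxx : ContinuousOn (Function.uncurry vxx) S := hsol.reg_sq_cont 2 (by norm_num)
  have hcvxxx : ContinuousOn (Function.uncurry vxxx) S := hsol.reg_sq_cont 3 (by norm_num)
  have hcbb : ContinuousOn (Function.uncurry bb) S :=
    (hcvxx.const_smul (1/2:ℝ)).add hcv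
  have hcbx : ContinuousOn (Function.uncurry bx) S :=
    (hcvxxx.const_smul (1/2:ℝ)).add hcvx
  have hcVt : ContinuousOn (Function.uncurry Vt) S :=
    (((hcbx.const_smul (2:ℝ)).mul hcv).add (hcbb.mul hcvx)).neg
  -- slices are continuous
  have hslice : ∀ (w : ℝ → ℝ → ℝ), ContinuousOn (Function.uncurry w) S →
      ∀ t, 0 ≤ t → Continuous (w t) := by
    intro w hw t ht
    exact hw.comp_continuous (continuous_const.prodMk continuous_id)
      (fun x => hIci (t, x) ht)
  -- spatial derivatives
  have hC3 : ∀ t, 0 ≤ t → ContDiff ℝ 3 (v t) := by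
    intro t ht
    have := hsol.reg_sq_C3 t ht
    simpa [hv_def] using this
  have hdv : ∀ t, 0 ≤ t → ∀ x, HasDerivAt (v t) (vx t x) x := by
    intro t ht x
    simp only [hvx_def, iteratedDeriv_one]
    exact (((hC3 t ht).differentiable (by norm_num)) x).hasDerivAt
  have hdvx : ∀ t, 0 ≤ t → ∀ x, HasDerivAt (vx t) (vxx t x) x := by
    intro t ht x
    have hdiff : Differentiable ℝ (iteratedDeriv 1 (v t)) :=
      (hC3 t ht).differentiable_iteratedDeriv 1 (by norm_num)
    have h := (hdiff x).hasDerivAt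
    rw [← iteratedDeriv_succ] at h
    simp only [hvx_def, hvxx_def]
    simpa using h
  have hdvxx : ∀ t, 0 ≤ t → ∀ x, HasDerivAt (vxx t) (vxxx t x) x := by
    intro t ht x
    have hdiff : Differentiable ℝ (iteratedDeriv 2 (v t)) :=
      (hC3 t ht).differentiable_iteratedDeriv 2 (by norm_num)
    have h := (hdiff x).hasDerivAt
    rw [← iteratedDeriv_succ] at h
    simp only [hvxx_def, hvxxx_def]
    simpa using h
  have hdbb : ∀ t, 0 ≤ t → ∀ x, HasDerivAt (bb t) (bx t x) x := by
    intro t ht x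
    simp only [hbb_def, hbx_def]
    exact ((hdvxx t ht x).const_mul (1/2:ℝ)).add (hdv t ht x)
  -- vanishing outside [-M, M]
  have hu00 : ∀ t, 0 ≤ t → ∀ y, y ∉ Icc (-M) M → u t y = 0 := by
    intro t ht y hy
    by_contra h
    exact hy (hsupp t ht (Function.mem_support.mpr h))
  have hzero : ∀ t, 0 ≤ t → ∀ n : ℕ, ∀ y, y ∉ Icc (-M) M → iteratedDeriv n (v t) y = 0 := by
    intro t ht n
    induction n with
    | zero =>
      intro y hy
      simp only [iteratedDeriv_zero, hv_def, hu00 t ht y hy]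
      norm_num
    | succ n ih =>
      intro y hy
      have hU : IsOpen {z : ℝ | z ∉ Icc (-M) M} := isClosed_Icc.isOpen_compl
      have hev : iteratedDeriv n (v t) =ᶠ[nhds y] (fun _ => (0:ℝ)) := by
        filter_upwards [hU.mem_nhds hy] with z hz
        exact ih z hz
      rw [iteratedDeriv_succ, hev.deriv_eq, deriv_const]
  have hvzero : ∀ t, 0 ≤ t → ∀ y, y ∉ Icc (-M) M →
      v t y = 0 ∧ vx t y = 0 ∧ vxx t y = 0 := by
    intro t ht y hy
    refine ⟨?_, hzero t ht 1 y hy, hzero t ht 2 y hy⟩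
    have := hzero t ht 0 y hy
    simpa [iteratedDeriv_zero] using this
  have hRout : (R : ℝ) ∉ Icc (-M) M := by
    intro h; exact absurd h.2 (by linarith)
  have hRout' : (-R : ℝ) ∉ Icc (-M) M := by
    intro h; have := h.1; linarith
  -- time derivative of v
  have hdt : ∀ x : ℝ, ∀ t, 0 < t → HasDerivAt (fun s => v s x) (Vt t x) t := by
    intro x t ht
    have hnb : ∀ z : ℝ, (Ici (0:ℝ) ×ˢ (univ : Set ℝ)) ∈ nhds (t, z) := by
      intro z
      exact mem_of_superset ((isOpen_Ioi.prod isOpen_univ).mem_nhds ⟨ht, mem_univ _⟩)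
        (prod_mono Ioi_subset_Ici_self le_rfl)
    have hud : DifferentiableAt ℝ (Function.uncurry u) (t, x) :=
      (hsol.reg_C1.contDiffAt (hnb x)).differentiableAt one_ne_zero
    have hut_diff : DifferentiableAt ℝ (fun s => u s x) t :=
      (hud.comp t ((differentiableAt_id : DifferentiableAt ℝ id t).prodMk (differentiableAt_const x)) :)
    have hut : HasDerivAt (fun s => u s x) (deriv (fun s => u s x) t) t := hut_diff.hasDerivAt
    have hux_diff : ∀ z : ℝ, DifferentiableAt ℝ (fun y => u t y) z := by
      intro z
      exact ((hsol.reg_C1.contDiffAt (hnb z)).differentiableAt one_ne_zero).comp z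
        ((differentiableAt_const t).prodMk differentiableAt_id)
    have hux : ∀ z, HasDerivAt (fun y => u t y) (deriv (fun y => u t y) z) z :=
      fun z => (hux_diff z).hasDerivAt
    have hdrift : (fun z => hydroDrift 1 u t z * u t z) = fun z => bb t z * u t z := by
      funext z
      simp only [hydroDrift, hbb_def, hvxx_def, hv_def]
      ring
    have heq := hsol.eq t ht.le x
    rw [hdrift] at heq
    have hprod : HasDerivAt (fun z => bb t z * u t z)
        (bx t x * u t x + bb t x * deriv (fun y => u t y) x) x :=
      (hdbb t ht.le x).mul (hux x)
    have hut_val : deriv (fun s => u s x) t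
        = -(bx t x * u t x + bb t x * deriv (fun y => u t y) x) := by
      rw [hprod.deriv] at heq; linarith
    have hvx_val : vx t x = 2 * u t x * deriv (fun y => u t y) x := by
      have h2 : HasDerivAt (fun y => u t y ^ 2)
          ((2:ℕ) * u t x ^ 1 * deriv (fun y => u t y) x) x := (hux x).pow 2
      simp only [hvx_def, hv_def, iteratedDeriv_one]
      rw [h2.deriv]
      push_cast; ring
    have hv_t : HasDerivAt (fun s => v s x)
        ((2:ℕ) * u t x ^ 1 * deriv (fun s => u s x) t) t := by
      simp only [hv_def]
      exact hut.pow 2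
    have hval : ((2:ℕ):ℝ) * u t x ^ 1 * deriv (fun s => u s x) t = Vt t x := by
      rw [hut_val]
      simp only [hVt_def, hv_def]
      rw [hvx_val]
      push_cast; ring
    exact hval ▸ hv_t
  -- interval integrability helper
  have hInt : ∀ (f : ℝ → ℝ), Continuous f → IntervalIntegrable f volume (-R) R :=
    fun f hf => hf.intervalIntegrable _ _
  -- functionals
  set XX : ℝ → ℝ := fun t => ∫ x in (-R)..R, (vx t x) ^ 2 with hXX_def
  set QQ : ℝ → ℝ := fun t => ∫ x in (-R)..R, (v t x) ^ 2 with hQQ_def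
  set mm : ℝ → ℝ := fun t => ∫ x in (-R)..R, v t x with hmm_def
  set FF : ℝ → ℝ := fun t => ∫ x in (-R)..R, x * v t x with hFF_def
  -- slice continuity shortcuts
  have hcvt : ∀ t, 0 ≤ t → Continuous (v t) := hslice v hcv
  have hcvxt : ∀ t, 0 ≤ t → Continuous (vx t) := hslice vx hcvx
  have hcvxxt : ∀ t, 0 ≤ t → Continuous (vxx t) := hslice vxx hcvxx
  have hcbbt : ∀ t, 0 ≤ t → Continuous (bb t) := hslice bb hcbb
  have hcVtt : ∀ t, 0 ≤ t → Continuous (Vt t) := hslice Vt hcVt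
  -- the explicit antiderivative of Vt
  set A1 : ℝ → ℝ → ℝ := fun t x =>
    -((1/2) * v t x * vxx t x - (1/4) * vx t x ^ 2 + (1/2) * v t x ^ 2 + bb t x * v t x)
    with hA1_def
  have hcA1t : ∀ t, 0 ≤ t → Continuous (A1 t) := by
    intro t ht
    simp only [hA1_def]
    exact (((((continuous_const.mul (hcvt t ht)).mul (hcvxxt t ht)).sub
      (continuous_const.mul ((hcvxt t ht).pow 2))).add
      (continuous_const.mul ((hcvt t ht).pow 2))).add
      ((hcbbt t ht).mul (hcvt t ht))).neg
  have hA1d : ∀ t, 0 ≤ t → ∀ x, HasDerivAt (A1 t) (Vt t x) x := by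
    intro t ht x
    have h1 := ((hdv t ht x).const_mul (1/2:ℝ)).mul (hdvxx t ht x)
    have h2 := ((hdvx t ht x).pow 2).const_mul (1/4:ℝ)
    have h3 := ((hdv t ht x).pow 2).const_mul (1/2:ℝ)
    have h4 := (hdbb t ht x).mul (hdv t ht x)
    have h := (((h1.sub h2).add h3).add h4).neg
    simp only [hA1_def]
    refine h.congr_deriv ?_
    simp only [hVt_def, hbx_def]
    push_cast; ring
  have hE1 : ∀ t, 0 ≤ t → (∫ x in (-R)..R, Vt t x) = 0 := by
    intro t ht
    rw [intervalIntegral.integral_eq_sub_of_hasDerivAt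
      (fun y _ => hA1d t ht y) (hInt _ (hcVtt t ht))]
    have hz1 := hvzero t ht R hRout
    have hz2 := hvzero t ht (-R) hRout'
    simp [hA1_def, hz1.1, hz1.2.1, hz2.1, hz2.2.1]
  have hvvxx : ∀ t, 0 ≤ t → (∫ x in (-R)..R, v t x * vxx t x) = - XX t := by
    intro t ht
    have h0 : (∫ y in (-R)..R, (vx t y * vx t y + v t y * vxx t y)) = 0 := by
      rw [intervalIntegral.integral_eq_sub_of_hasDerivAt
        (fun y _ => (hdv t ht y).mul (hdvx t ht y))
        (hInt _ (((hcvxt t ht).mul (hcvxt t ht)).add ((hcvt t ht).mul (hcvxxt t ht))))]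
      have hz1 := hvzero t ht R hRout
      have hz2 := hvzero t ht (-R) hRout'
      simp [hz1.1, hz1.2.1, hz2.1, hz2.2.1]
    rw [intervalIntegral.integral_add (hInt (fun y => vx t y * vx t y) ((hcvxt t ht).mul (hcvxt t ht)))
      (hInt (fun y => v t y * vxx t y) ((hcvt t ht).mul (hcvxxt t ht)))] at h0
    have hXXeq : (∫ y in (-R)..R, vx t y * vx t y) = XX t := by
      simp only [hXX_def]
      apply intervalIntegral.integral_congr
      intro y _; ring
    linarith
  have hE2 : ∀ t, 0 ≤ t → (∫ x in (-R)..R, x * Vt t x) = -(5/4) * XX t + (3/2) * QQ t := by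
    intro t ht
    have hstep1 : (∫ y in (-R)..R, (A1 t y + y * Vt t y)) = 0 := by
      rw [intervalIntegral.integral_eq_sub_of_hasDerivAt
        (f := fun z => z * A1 t z)
        (f' := fun y => A1 t y + y * Vt t y)
        (fun y _ => by
          have h := (hasDerivAt_id y).mul (hA1d t ht y)
          simp only [id_eq] at h
          refine h.congr_deriv ?_; ring)
        (hInt _ ((hcA1t t ht).add (continuous_id'.mul (hcVtt t ht))))]
      have hz1 := hvzero t ht R hRout
      have hz2 := hvzero t ht (-R) hRout'
      simp [hA1_def, hz1.1, hz1.2.1, hz2.1, hz2.2.1]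
    rw [intervalIntegral.integral_add (hInt _ (hcA1t t ht))
      (hInt (fun y => y * Vt t y) (continuous_id'.mul (hcVtt t ht)))] at hstep1
    have hA1int : (∫ y in (-R)..R, A1 t y) = (5/4) * XX t - (3/2) * QQ t := by
      have hpt : ∀ y ∈ uIcc (-R) R, A1 t y
          = -(v t y * vxx t y) + ((1/4) * (vx t y)^2 - (3/2) * (v t y)^2) := by
        intro y _; simp only [hA1_def, hbb_def]; ring
      rw [intervalIntegral.integral_congr hpt,
        intervalIntegral.integral_add (hInt (fun y => -(v t y * vxx t y)) ((hcvt t ht).mul (hcvxxt t ht)).neg)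
          (hInt (fun y => (1/4) * (vx t y)^2 - (3/2) * (v t y)^2) ((continuous_const.mul ((hcvxt t ht).pow 2)).sub
            (continuous_const.mul ((hcvt t ht).pow 2)))),
        intervalIntegral.integral_neg, hvvxx t ht,
        intervalIntegral.integral_sub (hInt (fun y => (1/4) * (vx t y)^2) (continuous_const.mul ((hcvxt t ht).pow 2)))
          (hInt (fun y => (3/2) * (v t y)^2) (continuous_const.mul ((hcvt t ht).pow 2))),
        intervalIntegral.integral_const_mul, intervalIntegral.integral_const_mul]
      simp only [hXX_def, hQQ_def]
      ring
    linarith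
  have hE3 : ∀ t, 0 ≤ t → (∫ x in (-R)..R, Vt t x * bb t x) = 0 := by
    intro t ht
    rw [intervalIntegral.integral_eq_sub_of_hasDerivAt
      (f := fun z => -(bb t z ^ 2 * v t z))
      (f' := fun y => Vt t y * bb t y)
      (fun y _ => by
        have h := (((hdbb t ht y).pow 2).mul (hdv t ht y)).neg
        refine h.congr_deriv ?_
        simp only [hVt_def, Pi.pow_apply]
        push_cast; ring)
      (hInt _ ((hcVtt t ht).mul (hcbbt t ht)))]
    have hz1 := hvzero t ht R hRout
    have hz2 := hvzero t ht (-R) hRout'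
    simp [hz1.1, hz2.1]
  -- derivatives of the functionals for t > 0
  have hm' : ∀ t₀, 0 < t₀ → HasDerivAt mm 0 t₀ := by
    intro t₀ ht₀
    have h := hydro_aux_slope v Vt (fun _ _ => (1:ℝ)) R hR0.le mm t₀ ht₀
      (hS_def ▸ hcVt) continuousOn_const (fun s hs => hcvt s hs.le) hdt
      (by
        intro s hs
        simp only [hmm_def]
        rw [← intervalIntegral.integral_sub (hInt _ (hcvt s hs.le)) (hInt _ (hcvt t₀ ht₀.le))]
        apply intervalIntegral.integral_congr
        intro y _; ring)
    have hval : (∫ x in (-R)..R, Vt t₀ x * 1) = 0 := by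
      simp only [mul_one]; exact hE1 t₀ ht₀.le
    exact hval ▸ h
  have hF' : ∀ t₀, 0 < t₀ → HasDerivAt FF (-(5/4) * XX t₀ + (3/2) * QQ t₀) t₀ := by
    intro t₀ ht₀
    have h := hydro_aux_slope v Vt (fun _ x => x) R hR0.le FF t₀ ht₀
      (hS_def ▸ hcVt) (continuous_snd.continuousOn) (fun s hs => hcvt s hs.le) hdt
      (by
        intro s hs
        simp only [hFF_def]
        rw [← intervalIntegral.integral_sub
          (hInt (fun y => y * v s y) (continuous_id'.mul (hcvt s hs.le)))
          (hInt (fun y => y * v t₀ y) (continuous_id'.mul (hcvt t₀ ht₀.le)))]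
        apply intervalIntegral.integral_congr
        intro y _; ring)
    have hval : (∫ x in (-R)..R, Vt t₀ x * x) = -(5/4) * XX t₀ + (3/2) * QQ t₀ := by
      rw [← hE2 t₀ ht₀.le]
      apply intervalIntegral.integral_congr
      intro y _; ring
    exact hval ▸ h
  have hQ' : ∀ t₀, 0 < t₀ →
      HasDerivAt QQ (∫ x in (-R)..R, Vt t₀ x * (v t₀ x + v t₀ x)) t₀ := by
    intro t₀ ht₀
    exact hydro_aux_slope v Vt (fun s x => v s x + v t₀ x) R hR0.le QQ t₀ ht₀
      (hS_def ▸ hcVt)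
      ((hS_def ▸ hcv).add (((hcvt t₀ ht₀.le).comp continuous_snd).continuousOn))
      (fun s hs => hcvt s hs.le) hdt
      (by
        intro s hs
        simp only [hQQ_def]
        rw [← intervalIntegral.integral_sub (hInt (fun y => v s y ^ 2) ((hcvt s hs.le).pow 2))
          (hInt (fun y => v t₀ y ^ 2) ((hcvt t₀ ht₀.le).pow 2))]
        apply intervalIntegral.integral_congr
        intro y _; ring)
  have hX' : ∀ t₀, 0 < t₀ →
      HasDerivAt XX (∫ x in (-R)..R, Vt t₀ x * (-(vxx t₀ x + vxx t₀ x))) t₀ := by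
    intro t₀ ht₀
    refine hydro_aux_slope v Vt (fun s x => -(vxx s x + vxx t₀ x)) R hR0.le XX t₀ ht₀
      (hS_def ▸ hcVt)
      (((hS_def ▸ hcvxx).add (((hcvxxt t₀ ht₀.le)).comp continuous_snd).continuousOn).neg)
      (fun s hs => hcvt s hs.le) hdt ?_
    intro s hs
    have hs' : (0:ℝ) ≤ s := hs.le
    have ht' : (0:ℝ) ≤ t₀ := ht₀.le
    -- integration by parts identity
    have hparts : (∫ y in (-R)..R,
        ((vx s y - vx t₀ y) * (vx s y + vx t₀ y)
          + (v s y - v t₀ y) * (vxx s y + vxx t₀ y))) = 0 := by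
      rw [intervalIntegral.integral_eq_sub_of_hasDerivAt
        (f := fun z => (v s z - v t₀ z) * (vx s z + vx t₀ z))
        (f' := fun y => (vx s y - vx t₀ y) * (vx s y + vx t₀ y)
          + (v s y - v t₀ y) * (vxx s y + vxx t₀ y))
        (fun y _ => ((hdv s hs' y).sub (hdv t₀ ht' y)).mul ((hdvx s hs' y).add (hdvx t₀ ht' y)))
        (hInt _ ((((hcvxt s hs').sub (hcvxt t₀ ht')).mul ((hcvxt s hs').add (hcvxt t₀ ht'))).add
          (((hcvt s hs').sub (hcvt t₀ ht')).mul ((hcvxxt s hs').add (hcvxxt t₀ ht')))))]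
      have hz1 := hvzero s hs' R hRout
      have hz2 := hvzero s hs' (-R) hRout'
      have hz3 := hvzero t₀ ht' R hRout
      have hz4 := hvzero t₀ ht' (-R) hRout'
      simp [hz1.1, hz2.1, hz3.1, hz4.1]
    rw [intervalIntegral.integral_add
      (hInt (fun y => (vx s y - vx t₀ y) * (vx s y + vx t₀ y)) (((hcvxt s hs').sub (hcvxt t₀ ht')).mul ((hcvxt s hs').add (hcvxt t₀ ht'))))
      (hInt (fun y => (v s y - v t₀ y) * (vxx s y + vxx t₀ y)) (((hcvt s hs').sub (hcvt t₀ ht')).mul ((hcvxxt s hs').add (hcvxxt t₀ ht'))))]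
      at hparts
    have h1 : XX s - XX t₀
        = ∫ y in (-R)..R, (vx s y - vx t₀ y) * (vx s y + vx t₀ y) := by
      simp only [hXX_def]
      rw [← intervalIntegral.integral_sub (hInt (fun y => vx s y ^ 2) ((hcvxt s hs').pow 2))
        (hInt (fun y => vx t₀ y ^ 2) ((hcvxt t₀ ht').pow 2))]
      apply intervalIntegral.integral_congr
      intro y _; ring
    have h2 : (∫ y in (-R)..R, (v s y - v t₀ y) * -(vxx s y + vxx t₀ y))
        = - ∫ y in (-R)..R, (v s y - v t₀ y) * (vxx s y + vxx t₀ y) := by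
      rw [← intervalIntegral.integral_neg]
      apply intervalIntegral.integral_congr
      intro y _; ring
    rw [h1, h2]
    linarith
  set HH : ℝ → ℝ := fun t => (1/8) * XX t - (1/4) * QQ t with hHH_def
  have hH' : ∀ t₀, 0 < t₀ → HasDerivAt HH 0 t₀ := by
    intro t₀ ht₀
    have ht' : (0:ℝ) ≤ t₀ := ht₀.le
    have h := ((hX' t₀ ht₀).const_mul (1/8:ℝ)).sub ((hQ' t₀ ht₀).const_mul (1/4:ℝ))
    have hint1 : IntervalIntegrable (fun x => Vt t₀ x * (-(vxx t₀ x + vxx t₀ x))) volume (-R) R :=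
      hInt _ ((hcVtt t₀ ht').mul (((hcvxxt t₀ ht').add (hcvxxt t₀ ht')).neg))
    have hint2 : IntervalIntegrable (fun x => Vt t₀ x * (v t₀ x + v t₀ x)) volume (-R) R :=
      hInt _ ((hcVtt t₀ ht').mul ((hcvt t₀ ht').add (hcvt t₀ ht')))
    have hval : (1/8:ℝ) * (∫ x in (-R)..R, Vt t₀ x * (-(vxx t₀ x + vxx t₀ x)))
        - (1/4:ℝ) * (∫ x in (-R)..R, Vt t₀ x * (v t₀ x + v t₀ x)) = 0 := by
      rw [← intervalIntegral.integral_const_mul, ← intervalIntegral.integral_const_mul,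
        ← intervalIntegral.integral_sub (hint1.const_mul _) (hint2.const_mul _)]
      have : (∫ y in (-R)..R, ((1/8:ℝ) * (Vt t₀ y * (-(vxx t₀ y + vxx t₀ y)))
          - (1/4:ℝ) * (Vt t₀ y * (v t₀ y + v t₀ y))))
          = ∫ y in (-R)..R, (-(1/2:ℝ)) * (Vt t₀ y * bb t₀ y) := by
        apply intervalIntegral.integral_congr
        intro y _
        simp only [hbb_def]
        ring
      rw [this, intervalIntegral.integral_const_mul, hE3 t₀ ht']
      ring
    simp only [hHH_def]
    rw [← hval]
    exact h
  -- constancy of functionals with zero derivative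
  have hconst : ∀ (G : ℝ → ℝ), (∀ t, 0 < t → HasDerivAt G 0 t) →
      ∀ s t : ℝ, 0 < s → 0 < t → G s = G t := by
    intro G hG s t hs ht
    have hcontG : ContinuousOn G (Ioi 0) :=
      fun y hy => ((hG y hy).continuousAt).continuousWithinAt
    have hdiffG : DifferentiableOn ℝ G (interior (Ioi 0)) := by
      rw [interior_Ioi]
      exact fun y hy => ((hG y hy).differentiableAt).differentiableWithinAt
    have hd0 : ∀ y ∈ interior (Ioi (0:ℝ)), deriv G y = 0 := by
      rw [interior_Ioi]
      exact fun y hy => (hG y hy).deriv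
    have hmono := monotoneOn_of_deriv_nonneg (convex_Ioi (0:ℝ)) hcontG hdiffG
      (fun y hy => ge_of_eq (hd0 y hy))
    have hanti := antitoneOn_of_deriv_nonpos (convex_Ioi (0:ℝ)) hcontG hdiffG
      (fun y hy => le_of_eq (hd0 y hy))
    rcases le_total s t with h | h
    · exact le_antisymm (hmono hs ht h) (hanti hs ht h)
    · exact (le_antisymm (hmono ht hs h) (hanti ht hs h)).symm
  -- continuity of parametrized integrals at 0⁺
  have hcont0 : ∀ (w : ℝ → ℝ → ℝ), ContinuousOn (Function.uncurry w) S →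
      Tendsto (fun s => ∫ x in (-R)..R, w s x) (nhdsWithin 0 (Ioi 0))
        (nhds (∫ x in (-R)..R, w 0 x)) := by
    intro w hw
    have hsub : Icc (0:ℝ) 1 ×ˢ Icc (-R) R ⊆ S := by
      rw [hS_def]
      rintro ⟨s, x⟩ ⟨hs, -⟩
      exact ⟨hs.1, mem_univ _⟩
    obtain ⟨C, hC⟩ := hydro_aux_bound hw hsub
    have hIoc : Ioc (0:ℝ) 1 ∈ nhdsWithin 0 (Ioi 0) := by
      refine mem_nhdsWithin.mpr ⟨Iio 1, isOpen_Iio, by norm_num, ?_⟩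
      rintro y ⟨h1, h2⟩
      exact ⟨h2, le_of_lt h1⟩
    apply intervalIntegral.tendsto_integral_filter_of_dominated_convergence
      (bound := fun _ => C)
    · filter_upwards [hIoc] with s hs
      exact ((hslice w hw s hs.1.le).aestronglyMeasurable).restrict
    · filter_upwards [hIoc] with s hs
      refine ae_of_all _ (fun x hx => ?_)
      have hx' : x ∈ Icc (-R) R := by
        rw [Set.uIoc_of_le (by linarith : -R ≤ R)] at hx
        exact Ioc_subset_Icc_self hx
      exact hC s ⟨hs.1.le, hs.2⟩ x hx'
    · exact intervalIntegrable_const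
    · refine ae_of_all _ (fun x _ => ?_)
      have hcw : ContinuousWithinAt (Function.uncurry w) S (0, x) :=
        hw _ (hIci (0, x) le_rfl)
      have hmk : Tendsto (fun s : ℝ => (s, x)) (nhdsWithin 0 (Ioi 0))
          (nhdsWithin (0, x) S) := by
        apply ContinuousWithinAt.tendsto_nhdsWithin
          ((continuous_id.prodMk continuous_const).continuousWithinAt)
        intro s hs
        exact hIci (s, x) (le_of_lt hs)
      exact hcw.tendsto.comp hmk
  -- constants extend to 0
  have hm_const : ∀ t, 0 < t → mm t = mm 0 := by
    intro t ht
    have htend : Tendsto mm (nhdsWithin 0 (Ioi 0)) (nhds (mm 0)) := by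
      have := hcont0 v hcv
      rw [← hmm_def] at this
      simpa only [hmm_def] using this
    have htend2 : Tendsto mm (nhdsWithin 0 (Ioi 0)) (nhds (mm t)) := by
      apply Tendsto.congr' _ (tendsto_const_nhds (x := mm t))
      filter_upwards [self_mem_nhdsWithin] with s hs
      exact hconst mm hm' t s ht hs
    exact tendsto_nhds_unique htend2 htend
  have hH_const : ∀ t, 0 < t → HH t = HH 0 := by
    intro t ht
    have htendX : Tendsto XX (nhdsWithin 0 (Ioi 0)) (nhds (XX 0)) := by
      have := hcont0 (fun s x => vx s x ^ 2) (by exact hcvx.pow 2)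
      rw [← hXX_def] at this
      simpa only [hXX_def] using this
    have htendQ : Tendsto QQ (nhdsWithin 0 (Ioi 0)) (nhds (QQ 0)) := by
      have := hcont0 (fun s x => v s x ^ 2) (by exact hcv.pow 2)
      rw [← hQQ_def] at this
      simpa only [hQQ_def] using this
    have htend : Tendsto HH (nhdsWithin 0 (Ioi 0)) (nhds (HH 0)) := by
      rw [hHH_def]
      exact (htendX.const_mul _).sub (htendQ.const_mul _)
    have htend2 : Tendsto HH (nhdsWithin 0 (Ioi 0)) (nhds (HH t)) := by
      apply Tendsto.congr' _ (tendsto_const_nhds (x := HH t))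
      filter_upwards [self_mem_nhdsWithin] with s hs
      exact hconst HH hH' t s ht hs
    exact tendsto_nhds_unique htend2 htend
  -- initial Hamiltonian nonneg
  have hH0 : 0 ≤ HH 0 := by
    have hdiff0 : ∀ x, DifferentiableAt ℝ (u 0) x := by
      intro x
      have hdw : DifferentiableWithinAt ℝ (Function.uncurry u) (Ici (0:ℝ) ×ˢ univ) (0, x) :=
        (hsol.reg_C1.differentiableOn one_ne_zero) (0, x) ⟨mem_Ici.mpr le_rfl, mem_univ _⟩
      have hg : DifferentiableWithinAt ℝ (fun z : ℝ => ((0:ℝ), z)) univ x :=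
        ((differentiableAt_const (0:ℝ)).prodMk differentiableAt_id).differentiableWithinAt
      have hcomp := hdw.comp x hg (fun z _ => ⟨mem_Ici.mpr le_rfl, mem_univ _⟩)
      rw [differentiableWithinAt_univ] at hcomp
      exact hcomp
    have hvx0 : ∀ x, vx 0 x = 2 * (u 0 x * deriv (u 0) x) := by
      intro x
      have h2 : HasDerivAt (fun y => u 0 y ^ 2)
          ((2:ℕ) * u 0 x ^ 1 * deriv (u 0) x) x := (hdiff0 x).hasDerivAt.pow 2
      simp only [hvx_def, hv_def, iteratedDeriv_one]
      rw [h2.deriv]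
      push_cast; ring
    have hnotin : ∀ x : ℝ, x ∉ Ioc (-R) R → x ∉ Icc (-M) M := by
      intro x hx hx'
      rw [mem_Ioc, not_and_or, not_lt, not_le] at hx
      rcases hx with h | h
      · have := hx'.1; linarith
      · have := hx'.2; linarith
    have hint1 : (∫ x : ℝ, (u 0 x * deriv (u 0) x) ^ 2)
        = ∫ x in (-R)..R, (u 0 x * deriv (u 0) x) ^ 2 := by
      rw [intervalIntegral.integral_of_le (by linarith : -R ≤ R)]
      symm
      apply setIntegral_eq_integral_of_forall_compl_eq_zero
      intro x hx
      rw [hu00 0 le_rfl x (hnotin x hx)]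
      ring
    have hint2 : (∫ x : ℝ, (u 0 x) ^ 4) = ∫ x in (-R)..R, (u 0 x) ^ 4 := by
      rw [intervalIntegral.integral_of_le (by linarith : -R ≤ R)]
      symm
      apply setIntegral_eq_integral_of_forall_compl_eq_zero
      intro x hx
      rw [hu00 0 le_rfl x (hnotin x hx)]
      ring
    have hXX0 : (∫ x in (-R)..R, (u 0 x * deriv (u 0) x) ^ 2) = (1/4) * XX 0 := by
      simp only [hXX_def]
      rw [← intervalIntegral.integral_const_mul]
      apply intervalIntegral.integral_congr
      intro y _
      simp only [hvx0]; ring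
    have hQQ0 : (∫ x in (-R)..R, (u 0 x) ^ 4) = QQ 0 := by
      simp only [hQQ_def, hv_def]
      apply intervalIntegral.integral_congr
      intro y _; ring
    rw [hint1, hXX0, hint2, hQQ0] at hH
    simp only [hHH_def]
    linarith
  -- initial mass positive
  have hvnn : ∀ t y, 0 ≤ v t y := by
    intro t y; simp only [hv_def]; positivity
  have hm0 : 0 < mm 0 := by
    obtain ⟨x₀, hx₀⟩ : ∃ x₀, u 0 x₀ ≠ 0 := by
      by_contra h
      push_neg at h
      exact hu₀ (funext h)
    have hx₀M : x₀ ∈ Icc (-M) M := hsupp 0 le_rfl (Function.mem_support.mpr hx₀)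
    have hv0pos : 0 < v 0 x₀ := by
      simp only [hv_def]; positivity
    set c0 : ℝ := v 0 x₀ / 2 with hc0_def
    have hc00 : 0 < c0 := by positivity
    have hopen : IsOpen {y : ℝ | c0 < v 0 y} := isOpen_lt continuous_const (hcvt 0 le_rfl)
    obtain ⟨ε, hε, hball⟩ := Metric.isOpen_iff.mp hopen x₀ (by
      simp only [mem_setOf_eq, hc0_def]; linarith)
    set ε' : ℝ := min (ε/2) 1 with hε'_def
    have hε'0 : 0 < ε' := lt_min (by linarith) one_pos
    have hε'1 : ε' ≤ 1 := min_le_right _ _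
    have hε'2 : ε' ≤ ε/2 := min_le_left _ _
    have hsubIcc : ∀ y ∈ Icc (x₀ - ε') (x₀ + ε'), c0 ≤ v 0 y := by
      intro y hy
      rw [mem_Icc] at hy
      have : y ∈ Metric.ball x₀ ε := by
        rw [Metric.mem_ball, Real.dist_eq, abs_lt]
        constructor
        · linarith [hy.1]
        · linarith [hy.2]
      exact le_of_lt (hball this)
    have hb1 : -R ≤ x₀ - ε' := by have := hx₀M.1; simp only [hR_def]; linarith
    have hb2 : x₀ + ε' ≤ R := by have := hx₀M.2; simp only [hR_def]; linarith
    have hIv : IntervalIntegrable (v 0) volume (x₀ - ε') (x₀ + ε') :=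
      (hcvt 0 le_rfl).intervalIntegrable _ _
    have hI1 : 0 ≤ ∫ y in (-R)..(x₀ - ε'), v 0 y :=
      intervalIntegral.integral_nonneg hb1 (fun y _ => hvnn 0 y)
    have hI3 : 0 ≤ ∫ y in (x₀ + ε')..R, v 0 y :=
      intervalIntegral.integral_nonneg hb2 (fun y _ => hvnn 0 y)
    have hI2 : 2 * ε' * c0 ≤ ∫ y in (x₀ - ε')..(x₀ + ε'), v 0 y := by
      have hmono := intervalIntegral.integral_mono_on (by linarith : x₀ - ε' ≤ x₀ + ε')
        (intervalIntegrable_const (c := c0)) hIv hsubIcc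
      rw [intervalIntegral.integral_const, smul_eq_mul] at hmono
      calc 2 * ε' * c0 = (x₀ + ε' - (x₀ - ε')) * c0 := by ring
        _ ≤ _ := hmono
    have hsplit2 : (∫ y in (x₀ - ε')..(x₀ + ε'), v 0 y) + (∫ y in (x₀ + ε')..R, v 0 y)
        = ∫ y in (x₀ - ε')..R, v 0 y :=
      intervalIntegral.integral_add_adjacent_intervals hIv
        ((hcvt 0 le_rfl).intervalIntegrable _ _)
    have hsplit1 : (∫ y in (-R)..(x₀ - ε'), v 0 y) + (∫ y in (x₀ - ε')..R, v 0 y)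
        = ∫ y in (-R)..R, v 0 y :=
      intervalIntegral.integral_add_adjacent_intervals
        ((hcvt 0 le_rfl).intervalIntegrable _ _) ((hcvt 0 le_rfl).intervalIntegrable _ _)
    have hpos : 0 < 2 * ε' * c0 := by positivity
    simp only [hmm_def]
    linarith
  set c : ℝ := (mm 0)^2 / (2 * R) with hc_def
  have hc0 : 0 < c := by positivity
  -- lower bound on Q
  have hQlow : ∀ t, 0 < t → c ≤ QQ t := by
    intro t ht
    have ht' : (0:ℝ) ≤ t := ht.le
    have hmt : mm t = mm 0 := hm_const t ht
    set κ : ℝ := mm 0 / (2 * R) with hκ_def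
    have hnn : 0 ≤ ∫ y in (-R)..R, (v t y - κ)^2 :=
      intervalIntegral.integral_nonneg (by linarith) (fun y _ => sq_nonneg _)
    have hexp : (∫ y in (-R)..R, (v t y - κ)^2)
        = QQ t - 2 * κ * mm t + (2 * R) * κ^2 := by
      have hpt : ∀ y ∈ uIcc (-R) R, (v t y - κ)^2
          = ((v t y)^2 - (2*κ) * v t y) + κ^2 := by
        intro y _; ring
      rw [intervalIntegral.integral_congr hpt,
        intervalIntegral.integral_add
          (hInt (fun y => (v t y)^2 - (2*κ) * v t y) ((((hcvt t ht').pow 2)).sub (continuous_const.mul (hcvt t ht'))))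
          (intervalIntegrable_const),
        intervalIntegral.integral_sub (hInt (fun y => (v t y)^2) ((hcvt t ht').pow 2))
          (hInt (fun y => (2*κ) * v t y) (continuous_const.mul (hcvt t ht'))),
        intervalIntegral.integral_const_mul, intervalIntegral.integral_const, smul_eq_mul]
      simp only [hQQ_def, hmm_def]
      ring
    rw [hexp, hmt] at hnn
    have hcc : 2 * κ * mm 0 - (2 * R) * κ^2 = c := by
      simp only [hκ_def, hc_def]
      field_simp
      ring
    linarith
  -- F' bound
  have hF'le : ∀ t, 0 < t → -(5/4) * XX t + (3/2) * QQ t ≤ -c := by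
    intro t ht
    have h1 : 0 ≤ HH t := (hH_const t ht) ▸ hH0
    have h2 : c ≤ QQ t := hQlow t ht
    have h3 : 2 * QQ t ≤ XX t := by
      simp only [hHH_def] at h1; nlinarith
    nlinarith
  -- F bound
  have hFbd : ∀ t, 0 < t → |FF t| ≤ R * mm 0 := by
    intro t ht
    have ht' : (0:ℝ) ≤ t := ht.le
    have h1 : |FF t| ≤ ∫ y in (-R)..R, |y * v t y| := by
      simp only [hFF_def]
      exact intervalIntegral.abs_integral_le_integral_abs (by linarith)
    have h2 : (∫ y in (-R)..R, |y * v t y|) ≤ ∫ y in (-R)..R, R * v t y := by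
      refine intervalIntegral.integral_mono_on (by linarith)
        ((continuous_id'.mul (hcvt t ht')).abs.intervalIntegrable _ _)
        ((continuous_const.mul (hcvt t ht')).intervalIntegrable _ _) ?_
      intro y hy
      rw [mem_Icc] at hy
      have habs : |y * v t y| = |y| * v t y := by
        rw [abs_mul, abs_of_nonneg (hvnn t y)]
      rw [habs]
      exact mul_le_mul_of_nonneg_right (abs_le.mpr ⟨hy.1, hy.2⟩) (hvnn t y)
    have h3 : (∫ y in (-R)..R, R * v t y) = R * mm t := by
      rw [intervalIntegral.integral_const_mul]
      try simp only [hmm_def]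
    rw [hm_const t ht] at h3
    linarith
  -- endgame
  set G : ℝ → ℝ := fun t => FF t + c * t with hG_def
  have hGd : ∀ t, 0 < t → HasDerivAt G (-(5/4) * XX t + (3/2) * QQ t + c) t := by
    intro t ht
    have h : HasDerivAt (fun y => FF y + c * y)
        (-(5/4) * XX t + (3/2) * QQ t + c * 1) t :=
      (hF' t ht).add ((hasDerivAt_id t).const_mul c)
    simp only [hG_def]
    convert h using 1
    ring
  have hcontG : ContinuousOn G (Ici 1) := by
    intro t htt
    have h1 : (0:ℝ) < t := by have := mem_Ici.mp htt; linarith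
    exact ((hGd t h1).continuousAt).continuousWithinAt
  have hdiffG : DifferentiableOn ℝ G (interior (Ici 1)) := by
    rw [interior_Ici]
    intro t htt
    have h1 : (0:ℝ) < t := by have := mem_Ioi.mp htt; linarith
    exact ((hGd t h1).differentiableAt).differentiableWithinAt
  have hderivG : ∀ t ∈ interior (Ici (1:ℝ)), deriv G t ≤ 0 := by
    rw [interior_Ici]
    intro t htt
    have h1 : (0:ℝ) < t := by have := mem_Ioi.mp htt; linarith
    rw [(hGd t h1).deriv]
    have := hF'le t h1
    linarith
  have hanti := antitoneOn_of_deriv_nonpos (convex_Ici 1) hcontG hdiffG hderivG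
  set T : ℝ := max 1 ((FF 1 + c + R * mm 0 + 1)/c) with hT_def
  have hT1 : (1:ℝ) ≤ T := le_max_left _ _
  have hTq : (FF 1 + c + R * mm 0 + 1)/c ≤ T := le_max_right _ _
  have hGT : G T ≤ G 1 := hanti (mem_Ici.mpr le_rfl) (mem_Ici.mpr hT1) hT1
  have hFT : -(R * mm 0) ≤ FF T := (abs_le.mp (hFbd T (by linarith))).1
  have hcT : FF 1 + c + R * mm 0 + 1 ≤ c * T := by
    rw [div_le_iff₀ hc0] at hTq
    linarith
  simp only [hG_def] at hGT
  linarith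
end

section
/- Solution of the bicharacteristic system for degenerate dispersion: for ρ(x) = x^k with k ≠ 3, the Hamiltonian system ẋ = −3ρ(x)ξ², ξ̇ = ρ'(x)ξ³ with initial data (x₀, ξ₀), x₀ > 0, is solved by x(t) = x₀(1 + (k−3)x₀^{k−1}ξ₀² t)^{3/(3−k)} and ξ(t) = ξ₀(1 + (k−3)x₀^{k−1}ξ₀² t)^{k/(k−3)} (for t such that the base is positive). -/
open Real

/-- Explicit solution of the bicharacteristic system `ẋ = −3x^k ξ²`, `ξ̇ = k x^{k−1} ξ³`
for `ρ(x) = x^k`, `k ≠ 3`, with initial data `(x₀, ξ₀)`, `x₀ > 0`. -/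
theorem bicharacteristics_explicit_solution (k x₀ ξ₀ : ℝ) (hk : k ≠ 3) (hx₀ : 0 < x₀)
    (x ξ : ℝ → ℝ)
    (hx : ∀ t, x t = x₀ * (1 + (k - 3) * x₀ ^ (k - 1) * ξ₀ ^ 2 * t) ^ (3 / (3 - k)))
    (hξ : ∀ t, ξ t = ξ₀ * (1 + (k - 3) * x₀ ^ (k - 1) * ξ₀ ^ 2 * t) ^ (k / (k - 3))) :
    x 0 = x₀ ∧ ξ 0 = ξ₀ ∧
      ∀ t : ℝ, 0 < 1 + (k - 3) * x₀ ^ (k - 1) * ξ₀ ^ 2 * t →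
        HasDerivAt x (-3 * (x t) ^ k * (ξ t) ^ 2) t ∧
        HasDerivAt ξ (k * (x t) ^ (k - 1) * (ξ t) ^ 3) t := by
  have h3k : (3:ℝ) - k ≠ 0 := sub_ne_zero.mpr (Ne.symm hk)
  have hk3 : k - 3 ≠ 0 := sub_ne_zero.mpr hk
  refine ⟨by rw [hx]; simp, by rw [hξ]; simp, ?_⟩
  intro t hu
  set c : ℝ := (k - 3) * x₀ ^ (k - 1) * ξ₀ ^ 2 with hc
  set u : ℝ := 1 + c * t with hudef
  have hup : (0:ℝ) < u := hu
  set p : ℝ := 3 / (3 - k) with hp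
  set q : ℝ := k / (k - 3) with hq
  have hdu : HasDerivAt (fun t : ℝ => 1 + c * t) c t := by
    simpa using ((hasDerivAt_id t).const_mul c).const_add 1
  have h3 : x₀ ^ k = x₀ * x₀ ^ (k - 1) := by
    have h := Real.rpow_add hx₀ 1 (k - 1)
    rw [show (1:ℝ) + (k - 1) = k by ring, Real.rpow_one] at h
    exact h
  have h1 : ∀ a : ℝ, (x₀ * u ^ p) ^ a = x₀ ^ a * u ^ (p * a) := by
    intro a
    rw [Real.mul_rpow hx₀.le (Real.rpow_pos_of_pos hup _).le, ← Real.rpow_mul hup.le]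
  have h2 : ∀ n : ℕ, (ξ₀ * u ^ q) ^ n = ξ₀ ^ n * u ^ (q * n) := by
    intro n
    rw [mul_pow, ← Real.rpow_natCast (u ^ q) n, ← Real.rpow_mul hup.le]
  constructor
  · have hd : HasDerivAt (fun s : ℝ => x₀ * (1 + c * s) ^ p)
        (x₀ * (c * p * u ^ (p - 1))) t :=
      (hdu.rpow_const (Or.inl hup.ne')).const_mul x₀
    have hfun : x = fun s : ℝ => x₀ * (1 + c * s) ^ p := funext fun s => hx s
    rw [hfun]
    convert hd using 1
    beta_reduce
    rw [hξ t, ← hudef, h1 k, h2 2, h3]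
    have he : u ^ (p * k) * u ^ (q * (2:ℕ)) = u ^ (p - 1) := by
      rw [← Real.rpow_add hup]
      congr 1
      push_cast
      rw [hp, hq]
      field_simp
      ring
    calc -3 * (x₀ * x₀ ^ (k - 1) * u ^ (p * k)) * (ξ₀ ^ 2 * u ^ (q * (2:ℕ)))
        = -3 * (x₀ * x₀ ^ (k - 1)) * ξ₀ ^ 2 * (u ^ (p * k) * u ^ (q * (2:ℕ))) := by ring
      _ = -3 * (x₀ * x₀ ^ (k - 1)) * ξ₀ ^ 2 * u ^ (p - 1) := by rw [he]
      _ = x₀ * (c * p * u ^ (p - 1)) := by rw [hc, hp]; field_simp; ring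
  · have hd : HasDerivAt (fun s : ℝ => ξ₀ * (1 + c * s) ^ q)
        (ξ₀ * (c * q * u ^ (q - 1))) t :=
      (hdu.rpow_const (Or.inl hup.ne')).const_mul ξ₀
    have hfun : ξ = fun s : ℝ => ξ₀ * (1 + c * s) ^ q := funext fun s => hξ s
    rw [hfun]
    convert hd using 1
    beta_reduce
    rw [hx t, ← hudef, h1 (k - 1), h2 3]
    have he : u ^ (p * (k - 1)) * u ^ (q * (3:ℕ)) = u ^ (q - 1) := by
      rw [← Real.rpow_add hup]
      congr 1
      push_cast
      rw [hp, hq]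
      field_simp
      ring
    calc k * (x₀ ^ (k - 1) * u ^ (p * (k - 1))) * (ξ₀ ^ 3 * u ^ (q * (3:ℕ)))
        = k * x₀ ^ (k - 1) * ξ₀ ^ 3 * (u ^ (p * (k - 1)) * u ^ (q * (3:ℕ))) := by ring
      _ = k * x₀ ^ (k - 1) * ξ₀ ^ 3 * u ^ (q - 1) := by rw [he]
      _ = ξ₀ * (c * q * u ^ (q - 1)) := by rw [hc, hq]; field_simp
end
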